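/- arXiv:1404.4134 — 3 statements merged into one kernel-verified Lean document; each statement's English description precedes it below -/
import Mathlib

section
/- For any unitary matrix U of size 2n with eigenvalues e^{iθ_j}, θ_j ∈ (−π, π], whose top-left n×n block is K, the maximum of |θ_j| over all j is at least arccos(λ_min(K + K†)/2), where λ_min denotes the smallest eigenvalue of a Hermitian matrix. -/
open Matrix Complex Real

/-- The smallest eigenvalue of a Hermitian matrix. -/
noncomputable def lammin {n : ℕ} (A : Matrix (Fin n) (Fin n) ℂ) (hA : A.IsHermitian) : ℝ :=
  ⨅ i, hA.eigenvalues i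

lemma arccos_antitone : Antitone Real.arccos := fun _ _ h =>
  sub_le_sub_left (Real.monotone_arcsin h) _

/-- For any unitary matrix `U` of size `2n` (indexed by `Fin n ⊕ Fin n`) with eigenvalues
`e^{iθ_j}`, `θ_j ∈ (−π, π]`, whose top-left `n × n` block is `K = U.toBlocks₁₁`, the maximum of
`|θ_j|` is at least `arccos(λ_min(K + Kᴴ)/2)`. -/
theorem max_phase_ge_arccos_lammin_block (n : ℕ) (hn : 0 < n)
    (U V : Matrix (Fin n ⊕ Fin n) (Fin n ⊕ Fin n) ℂ)
    (hU : U ∈ Matrix.unitaryGroup (Fin n ⊕ Fin n) ℂ)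
    (hV : V ∈ Matrix.unitaryGroup (Fin n ⊕ Fin n) ℂ)
    (θ : Fin n ⊕ Fin n → ℝ) (hθ : ∀ j, θ j ∈ Set.Ioc (-Real.pi) Real.pi)
    (hdiag : U = V * Matrix.diagonal (fun j => Complex.exp (θ j * Complex.I)) * Vᴴ) :
    Real.arccos (lammin (U.toBlocks₁₁ + (U.toBlocks₁₁)ᴴ)
        (Matrix.isHermitian_add_transpose_self _) / 2)
      ≤ ⨆ j, |θ j| := by
  classical
  have hne : Nonempty (Fin n ⊕ Fin n) := ⟨Sum.inl ⟨0, hn⟩⟩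
  set M := ⨆ j, |θ j| with hMdef
  have hbdd : BddAbove (Set.range fun j => |θ j|) :=
    Set.Finite.bddAbove (Set.finite_range _)
  have hMle : ∀ j, |θ j| ≤ M := fun j => le_ciSup hbdd j
  have hM0 : 0 ≤ M := le_trans (abs_nonneg _) (hMle (Sum.inl ⟨0, hn⟩))
  have hMpi : M ≤ π := ciSup_le fun j => abs_le.mpr ⟨le_of_lt (hθ j).1, (hθ j).2⟩
  have hcos : ∀ j, Real.cos M ≤ Real.cos (θ j) := by
    intro j
    rw [← Real.cos_abs (θ j)]
    exact Real.cos_le_cos_of_nonneg_of_le_pi (abs_nonneg _) hMpi (hMle j)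
  set K := U.toBlocks₁₁ with hKdef
  set A := K + Kᴴ with hAdef
  have hA : A.IsHermitian := Matrix.isHermitian_add_transpose_self _
  suffices h : Real.cos M ≤ lammin A hA / 2 by
    calc Real.arccos (lammin A hA / 2) ≤ Real.arccos (Real.cos M) := arccos_antitone h
    _ = M := Real.arccos_cos hM0 hMpi
  rw [lammin, le_div_iff₀ (by norm_num : (0:ℝ) < 2)]
  haveI : Nonempty (Fin n) := ⟨⟨0, hn⟩⟩
  refine le_ciInf fun i => ?_
  -- the eigenvector of `A` for eigenvalue `i`, and its zero-extension `y`
  set x : Fin n → ℂ := ⇑(hA.eigenvectorBasis i) with hxdef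
  have hxnorm : star x ⬝ᵥ x = 1 := by
    have h1 : ‖hA.eigenvectorBasis i‖ = 1 := hA.eigenvectorBasis.orthonormal.1 i
    have := EuclideanSpace.inner_eq_star_dotProduct (𝕜 := ℂ)
      (hA.eigenvectorBasis i) (hA.eigenvectorBasis i)
    rw [inner_self_eq_norm_sq_to_K, h1] at this
    rw [dotProduct_comm]
    simpa using this.symm
  set y : (Fin n ⊕ Fin n) → ℂ := Sum.elim x 0 with hydef
  have hyx : star y ⬝ᵥ y = star x ⬝ᵥ x := by
    simp [hydef, dotProduct, Fintype.sum_sum_type]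
  have hyK : star y ⬝ᵥ (U *ᵥ y) = star x ⬝ᵥ (K *ᵥ x) := by
    simp [hydef, hKdef, dotProduct, mulVec, Matrix.toBlocks₁₁, Fintype.sum_sum_type]
  -- the coefficients of `y` in the eigenbasis of `U`
  set c : (Fin n ⊕ Fin n) → ℂ := Vᴴ *ᵥ y with hcdef
  have hswap : ∀ z, star y ⬝ᵥ (V *ᵥ z) = star c ⬝ᵥ z := by
    intro z
    rw [hcdef, star_mulVec, dotProduct_mulVec, conjTranspose_conjTranspose]
  have hVV : V * Vᴴ = 1 := (Matrix.mem_unitaryGroup_iff).mp hV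
  have hcc : star c ⬝ᵥ c = 1 := by
    rw [← hswap c, hcdef, mulVec_mulVec, hVV, one_mulVec, hyx, hxnorm]
  have hsum1 : ∑ j, Complex.normSq (c j) = 1 := by
    have := congrArg Complex.re hcc
    simpa [dotProduct, Complex.normSq_eq_conj_mul_self, Complex.normSq_apply] using this
  have hUdiag : star y ⬝ᵥ (U *ᵥ y)
      = ∑ j, Complex.exp (θ j * Complex.I) * (Complex.normSq (c j) : ℂ) := by
    rw [hdiag, ← mulVec_mulVec, ← mulVec_mulVec, hswap, ← hcdef, dotProduct]
    refine Finset.sum_congr rfl fun j _ => ?_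
    rw [mulVec_diagonal, Complex.normSq_eq_conj_mul_self]
    simp only [Pi.star_apply, Complex.star_def]
    ring
  have hre : (star y ⬝ᵥ (U *ᵥ y)).re = ∑ j, Real.cos (θ j) * Complex.normSq (c j) := by
    rw [hUdiag, Complex.re_sum]
    refine Finset.sum_congr rfl fun j _ => ?_
    rw [Complex.mul_re]
    simp [Complex.exp_ofReal_mul_I_re, Complex.exp_ofReal_mul_I_im]
  have hre_ge : Real.cos M ≤ (star y ⬝ᵥ (U *ᵥ y)).re := by
    rw [hre]
    calc Real.cos M = ∑ j, Real.cos M * Complex.normSq (c j) := by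
          rw [← Finset.mul_sum, hsum1, mul_one]
    _ ≤ ∑ j, Real.cos (θ j) * Complex.normSq (c j) :=
        Finset.sum_le_sum fun j _ =>
          mul_le_mul_of_nonneg_right (hcos j) (Complex.normSq_nonneg _)
  -- the quadratic form of `A` at `x`
  have hconj : star x ⬝ᵥ (Kᴴ *ᵥ x) = star (star x ⬝ᵥ (K *ᵥ x)) := by
    rw [star_dotProduct, star_mulVec, conjTranspose_conjTranspose, dotProduct_mulVec]
  have hq : (star x ⬝ᵥ (A *ᵥ x)).re = 2 * (star x ⬝ᵥ (K *ᵥ x)).re := by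
    have hAx : A *ᵥ x = K *ᵥ x + Kᴴ *ᵥ x := by rw [hAdef, add_mulVec]
    rw [hAx, dotProduct_add, hconj, Complex.add_re, Complex.star_def, Complex.conj_re]
    ring
  have heig : hA.eigenvalues i = 2 * (star y ⬝ᵥ (U *ᵥ y)).re := by
    rw [hyK, ← hq]
    exact hA.eigenvalues_eq i
  rw [heig]
  have := hre_ge
  linarith
end

section
/- Given Kraus operators K_1, …, K_d ∈ C^{n×n} of a quantum channel (so ∑_j K_j†K_j = I), there exists a d×d unitary matrix W = [w_ij] such that the equivalent Kraus operators K̃_i = ∑_j w_ij K_j satisfy Tr(K̃_j) = 0 for all j = 2, …, d. -/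
open Matrix

/-- Given Kraus operators `K_1, …, K_d` of a quantum channel (`∑ j, K_jᴴ K_j = I`), there is a
`d × d` unitary matrix `W` such that the equivalent Kraus operators `K̃_i = ∑_j w_ij K_j`
satisfy `Tr(K̃_j) = 0` for all `j ≠ 1`. -/
theorem exists_unitary_traceless_kraus (n d : ℕ) (hd : 0 < d)
    (K : Fin d → Matrix (Fin n) (Fin n) ℂ)
    (hK : ∑ j, (K j)ᴴ * K j = 1) :
    ∃ W : Matrix (Fin d) (Fin d) ℂ, W ∈ Matrix.unitaryGroup (Fin d) ℂ ∧
      ∀ i : Fin d, i ≠ ⟨0, hd⟩ → Matrix.trace (∑ j, W i j • K j) = 0 := by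
  by_cases hv : ∀ j, Matrix.trace (K j) = 0
  · refine ⟨1, Submonoid.one_mem _, fun i _ => ?_⟩
    rw [trace_sum]
    simp [trace_smul, hv]
  · push_neg at hv
    -- the vector of traces, as an element of EuclideanSpace
    set v : EuclideanSpace ℂ (Fin d) := WithLp.toLp 2 (fun j => Matrix.trace (K j)) with hvdef
    have hv0 : v ≠ 0 := by
      obtain ⟨j, hj⟩ := hv
      intro h
      exact hj (by simpa [hvdef] using congrArg (fun w : EuclideanSpace ℂ (Fin d) => w j) h)
    set u : EuclideanSpace ℂ (Fin d) := (‖v‖ : ℂ)⁻¹ • v with hudef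
    have hnu : ‖u‖ = 1 := by
      rw [hudef, norm_smul]
      simp [norm_inv, norm_norm, inv_mul_cancel₀ (norm_ne_zero_iff.mpr hv0)]
    have hcard : Module.finrank ℂ (EuclideanSpace ℂ (Fin d)) = Fintype.card (Fin d) := by
      simp
    have horth : Orthonormal ℂ (Set.restrict {(⟨0, hd⟩ : Fin d)} (fun _ => u)) := by
      rw [orthonormal_iff_ite]
      rintro ⟨i, hi⟩ ⟨j, hj⟩
      simp only [Set.mem_singleton_iff] at hi hj
      subst hi; subst hj
      simp [inner_self_eq_norm_sq_to_K, hnu]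
      exact Or.inl hnu
    obtain ⟨b, hb⟩ := horth.exists_orthonormalBasis_extension_of_card_eq hcard
    have hb0 : b ⟨0, hd⟩ = u := hb _ rfl
    refine ⟨Matrix.of (fun i j => (starRingEnd ℂ) (b i j)), ?_, ?_⟩
    · rw [Matrix.mem_unitaryGroup_iff]
      ext i k
      simp only [Matrix.mul_apply, Matrix.one_apply, star_apply, Matrix.of_apply, RCLike.star_def]
      have := b.orthonormal
      rw [orthonormal_iff_ite] at this
      have h2 := this i k
      rw [← h2]
      rw [EuclideanSpace.inner_eq_star_dotProduct]
      simp [dotProduct, mul_comm]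
    · intro i hi
      rw [trace_sum]
      simp only [trace_smul, Matrix.of_apply, smul_eq_mul]
      have : ∑ j, (starRingEnd ℂ) (b i j) * Matrix.trace (K j) = inner ℂ (b i) v := by
        rw [EuclideanSpace.inner_eq_star_dotProduct]
        simp [dotProduct, hvdef, mul_comm]
      rw [this]
      have horthb := b.orthonormal
      rw [orthonormal_iff_ite] at horthb
      have h0 : (inner ℂ (b i) (b ⟨0, hd⟩) : ℂ) = 0 := by
        rw [horthb i ⟨0, hd⟩]; simp [hi]
      rw [hb0, hudef, inner_smul_right] at h0
      have hne : ((‖v‖ : ℂ))⁻¹ ≠ 0 := by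
        simp [norm_ne_zero_iff.mpr hv0]
      simpa [hne] using h0
end

section
/- Let K_j = s_j P_j for j = 1, …, d, where each P_j is a rank-r orthogonal projection in C^{n×n}, s_j ∈ C, and ∑_j K_j†K_j = I_n. Then max over v ∈ C^d with ‖v‖ ≤ 1 of (1/2)λ_min(∑_j v_j K_j + (∑_j v_j K_j)†) equals √(r/n). -/
open Matrix

lemma lammin_congr {n : ℕ} {A B : Matrix (Fin n) (Fin n) ℂ} (h : A = B)
    (hA : A.IsHermitian) (hB : B.IsHermitian) : lammin A hA = lammin B hB := by
  subst h; rfl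

lemma trace_eq_sum_eigs {n : ℕ} (A : Matrix (Fin n) (Fin n) ℂ) (hA : A.IsHermitian) :
    A.trace = ∑ i, (hA.eigenvalues i : ℂ) := by
  nth_rewrite 1 [hA.spectral_theorem]
  rw [Unitary.conjStarAlgAut_apply, Matrix.trace_mul_cycle, Unitary.coe_star_mul_self, one_mul, Matrix.trace_diagonal]
  rfl

lemma basis_ne_zero {n : ℕ} {A : Matrix (Fin n) (Fin n) ℂ} (hA : A.IsHermitian) (i : Fin n) :
    ∃ k, hA.eigenvectorBasis i k ≠ 0 := by
  by_contra h
  push_neg at h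
  have hb : hA.eigenvectorBasis i = 0 := by ext k; exact h k
  have := hA.eigenvectorBasis.orthonormal.1 i
  rw [hb] at this
  simp at this

lemma idem_eig {n : ℕ} {A : Matrix (Fin n) (Fin n) ℂ} (hA : A.IsHermitian)
    (hAA : A * A = A) (i : Fin n) : hA.eigenvalues i = 0 ∨ hA.eigenvalues i = 1 := by
  have h1 := hA.mulVec_eigenvectorBasis i
  have h2 : A *ᵥ (A *ᵥ ⇑(hA.eigenvectorBasis i)) = A *ᵥ ⇑(hA.eigenvectorBasis i) := by
    rw [Matrix.mulVec_mulVec, hAA]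
  rw [h1, Matrix.mulVec_smul, h1] at h2
  obtain ⟨k, hk⟩ := basis_ne_zero hA i
  have h3 := congrFun h2 k
  simp only [Pi.smul_apply, smul_smul, Complex.real_smul, Complex.ofReal_mul] at h3
  have h4 : (hA.eigenvalues i : ℂ) * hA.eigenvalues i = hA.eigenvalues i :=
    mul_right_cancel₀ hk (by rw [mul_assoc]; exact h3)
  have h5 : hA.eigenvalues i * hA.eigenvalues i = hA.eigenvalues i := by exact_mod_cast h4
  have h6 : hA.eigenvalues i * (hA.eigenvalues i - 1) = 0 := by ring_nf; linarith [h5]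
  rcases mul_eq_zero.mp h6 with h | h
  · exact Or.inl h
  · exact Or.inr (by linarith)

lemma herm_idem_trace {n : ℕ} {A : Matrix (Fin n) (Fin n) ℂ} (hA : A.IsHermitian)
    (hAA : A * A = A) : A.trace = (A.rank : ℂ) := by
  classical
  rw [trace_eq_sum_eigs A hA, hA.rank_eq_card_non_zero_eigs]
  have : ∑ i, (hA.eigenvalues i : ℂ) = ∑ i, (if hA.eigenvalues i ≠ 0 then (1 : ℂ) else 0) := by
    refine Finset.sum_congr rfl fun i _ => ?_
    rcases idem_eig hA hAA i with h | h <;> simp [h]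
  rw [this, Finset.sum_boole, Fintype.card_subtype]

lemma lammin_le_eig {n : ℕ} {A : Matrix (Fin n) (Fin n) ℂ} (hA : A.IsHermitian) (i : Fin n) :
    lammin A hA ≤ hA.eigenvalues i :=
  ciInf_le (Set.Finite.bddBelow (Set.finite_range _)) i

lemma nsmul_lammin_le_trace {n : ℕ} (A : Matrix (Fin n) (Fin n) ℂ) (hA : A.IsHermitian) :
    (n : ℝ) * lammin A hA ≤ A.trace.re := by
  have h1 : A.trace.re = ∑ i, hA.eigenvalues i := by
    rw [trace_eq_sum_eigs A hA]
    simp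
  rw [h1]
  calc (n : ℝ) * lammin A hA = ∑ _i : Fin n, lammin A hA := by
        rw [Finset.sum_const, Finset.card_univ, Fintype.card_fin, nsmul_eq_mul]
    _ ≤ ∑ i, hA.eigenvalues i := Finset.sum_le_sum fun i _ => lammin_le_eig hA i

lemma lammin_smul_one {n : ℕ} (hn : 0 < n) (c : ℝ)
    (h : (((c : ℂ)) • (1 : Matrix (Fin n) (Fin n) ℂ)).IsHermitian) :
    lammin _ h = c := by
  have he : ∀ i, h.eigenvalues i = c := by
    intro i
    have h1 := h.mulVec_eigenvectorBasis i
    rw [Matrix.smul_mulVec, Matrix.one_mulVec] at h1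
    obtain ⟨k, hk⟩ := basis_ne_zero h i
    have h2 := congrFun h1 k
    simp only [Pi.smul_apply, Complex.real_smul, smul_eq_mul] at h2
    have h3 : (c : ℂ) = h.eigenvalues i := mul_right_cancel₀ hk h2
    exact_mod_cast h3.symm
  haveI : Nonempty (Fin n) := Fin.pos_iff_nonempty.mp hn
  rw [lammin]
  simp [he]

lemma sqrt_helper {a b : ℝ} (ha : 0 < a) (hb : 0 < b) :
    a * Real.sqrt (b / a) / b = Real.sqrt (a / b) := by
  have hab : (0:ℝ) ≤ a / b := (div_pos ha hb).le
  have h1 : Real.sqrt (a / b) * Real.sqrt (b / a) = 1 := by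
    rw [← Real.sqrt_mul hab]
    rw [show a / b * (b / a) = 1 by field_simp]
    exact Real.sqrt_one
  have h2 : Real.sqrt (a / b) ^ 2 = a / b := Real.sq_sqrt hab
  calc a * Real.sqrt (b / a) / b = (a / b) * Real.sqrt (b / a) := by ring
    _ = Real.sqrt (a / b) ^ 2 * Real.sqrt (b / a) := by rw [h2]
    _ = Real.sqrt (a / b) * (Real.sqrt (a / b) * Real.sqrt (b / a)) := by ring
    _ = Real.sqrt (a / b) := by rw [h1, mul_one]

/-- For a projector channel with Kraus operators `K_j = s_j P_j`, where each `P_j` is a rank-`r`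
orthogonal projection and `∑_j K_jᴴ K_j = I`, the maximum over `v ∈ ℂ^d` with `‖v‖ ≤ 1` of
`(1/2) λ_min(K_v + K_vᴴ)` equals `√(r/n)`. -/
theorem projector_channel_max_half_lammin (n d r : ℕ) (hn : 0 < n) (hr : 0 < r) (hd : 0 < d)
    (P : Fin d → Matrix (Fin n) (Fin n) ℂ)
    (hproj : ∀ j, P j * P j = P j ∧ (P j)ᴴ = P j)
    (hrank : ∀ j, (P j).rank = r)
    (s : Fin d → ℂ)
    (K : Fin d → Matrix (Fin n) (Fin n) ℂ)
    (hKdef : ∀ j, K j = s j • P j)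
    (hK : ∑ j, (K j)ᴴ * K j = 1) :
    IsGreatest {x : ℝ | ∃ v : Fin d → ℂ, (∑ j, ‖v j‖ ^ 2 ≤ 1) ∧
        x = (1 / 2) * lammin ((∑ j, v j • K j) + (∑ j, v j • K j)ᴴ)
          (Matrix.isHermitian_add_transpose_self _)}
      (Real.sqrt ((r : ℝ) / n)) := by
  have hrR : (0:ℝ) < r := by exact_mod_cast hr
  have hnR : (0:ℝ) < n := by exact_mod_cast hn
  -- trace of each projector
  have hPtr : ∀ j, (P j).trace = (r : ℂ) := by
    intro j
    rw [herm_idem_trace (hproj j).2 (hproj j).1, hrank j]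
  -- completeness relation
  have hsum1 : ∑ j, (Complex.normSq (s j) : ℂ) • P j = 1 := by
    rw [← hK]
    refine Finset.sum_congr rfl fun j _ => ?_
    rw [hKdef j, Matrix.conjTranspose_smul, (hproj j).2, Matrix.smul_mul, Matrix.mul_smul,
      (hproj j).1, smul_smul]
    congr 1
    rw [Complex.star_def, mul_comm, Complex.mul_conj]
  -- sum of |s_j|^2
  have hS : (∑ j, Complex.normSq (s j)) * r = n := by
    have := congrArg Matrix.trace hsum1
    rw [Matrix.trace_sum, Matrix.trace_one] at this
    simp only [Matrix.trace_smul, hPtr, smul_eq_mul, Fintype.card_fin] at this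
    rw [← Finset.sum_mul] at this
    exact_mod_cast this
  have hs2 : ∑ j, ‖s j‖ ^ 2 = (n : ℝ) / r := by
    have h : ∑ j, ‖s j‖ ^ 2 = ∑ j, Complex.normSq (s j) := by
      simp [Complex.sq_norm]
    rw [h, eq_div_iff (ne_of_gt hrR)]
    exact hS
  constructor
  · -- membership: optimal v
    set c : ℝ := Real.sqrt ((r : ℝ) / n) with hc
    have hc0 : 0 ≤ c := Real.sqrt_nonneg _
    have hc2 : c ^ 2 = (r : ℝ) / n := Real.sq_sqrt (by positivity)
    refine ⟨fun j => (c : ℂ) * star (s j), ?_, ?_⟩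
    · have : ∑ j, ‖(c : ℂ) * star (s j)‖ ^ 2
          = c ^ 2 * ∑ j, ‖s j‖ ^ 2 := by
        rw [Finset.mul_sum]
        refine Finset.sum_congr rfl fun j _ => ?_
        rw [norm_mul, mul_pow]
        congr 1
        · rw [Complex.norm_real, Real.norm_eq_abs, abs_of_nonneg hc0]
        · rw [Complex.star_def, Complex.norm_conj]
      rw [this, hs2, hc2]
      rw [div_mul_div_comm]
      rw [show (r : ℝ) * n = n * r by ring]
      rw [div_self (by positivity)]
    · have hBv : ∑ j, ((c : ℂ) * star (s j)) • K j = (c : ℂ) • (1 : Matrix (Fin n) (Fin n) ℂ) := by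
        rw [← hsum1, Finset.smul_sum]
        refine Finset.sum_congr rfl fun j _ => ?_
        rw [hKdef j, smul_smul, smul_smul]
        congr 1
        rw [mul_assoc]
        congr 1
        rw [Complex.star_def, mul_comm, Complex.mul_conj]
      have hEq : (∑ j, ((c : ℂ) * star (s j)) • K j) + (∑ j, ((c : ℂ) * star (s j)) • K j)ᴴ
          = (((2 * c : ℝ) : ℂ)) • (1 : Matrix (Fin n) (Fin n) ℂ) := by
        rw [hBv, Matrix.conjTranspose_smul, Matrix.conjTranspose_one]
        rw [show (star (c : ℂ)) = (c : ℂ) by rw [Complex.star_def, Complex.conj_ofReal]]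
        rw [← add_smul]
        congr 1
        push_cast
        ring
      rw [lammin_congr hEq (Matrix.isHermitian_add_transpose_self _)
        (hEq ▸ Matrix.isHermitian_add_transpose_self _), lammin_smul_one hn]
      ring
  · -- upper bound
    rintro x ⟨v, hv, rfl⟩
    set A := (∑ j, v j • K j) + (∑ j, v j • K j)ᴴ with hA
    have hBtr : (∑ j, v j • K j).trace = (∑ j, v j * s j) * (r : ℂ) := by
      rw [Matrix.trace_sum, Finset.sum_mul]
      refine Finset.sum_congr rfl fun j _ => ?_
      rw [hKdef j, smul_smul, Matrix.trace_smul, hPtr j, smul_eq_mul, mul_assoc]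
    set T : ℂ := ∑ j, v j * s j with hT
    have htrre : A.trace.re = 2 * r * T.re := by
      rw [hA, Matrix.trace_add, Matrix.trace_conjTranspose, hBtr]
      simp [Complex.add_re, Complex.mul_re]
      ring
    have h1 : T.re ≤ ∑ j, ‖v j‖ * ‖s j‖ := by
      rw [hT, Complex.re_sum]
      refine Finset.sum_le_sum fun j _ => ?_
      calc (v j * s j).re ≤ ‖v j * s j‖ := Complex.re_le_norm _
        _ = ‖v j‖ * ‖s j‖ := norm_mul _ _
    have hcs : (∑ j, ‖v j‖ * ‖s j‖) ^ 2 ≤ (n : ℝ) / r := by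
      calc (∑ j, ‖v j‖ * ‖s j‖) ^ 2
          ≤ (∑ j, ‖v j‖ ^ 2) * (∑ j, ‖s j‖ ^ 2) :=
            Finset.sum_mul_sq_le_sq_mul_sq Finset.univ _ _
        _ ≤ 1 * ((n : ℝ) / r) := by
            refine mul_le_mul hv (le_of_eq hs2) ?_ zero_le_one
            positivity
        _ = (n : ℝ) / r := one_mul _
    have h2 : ∑ j, ‖v j‖ * ‖s j‖ ≤ Real.sqrt ((n : ℝ) / r) := by
      have hnn : (0:ℝ) ≤ ∑ j, ‖v j‖ * ‖s j‖ := by positivity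
      calc ∑ j, ‖v j‖ * ‖s j‖
          = Real.sqrt ((∑ j, ‖v j‖ * ‖s j‖) ^ 2) :=
            (Real.sqrt_sq hnn).symm
        _ ≤ Real.sqrt ((n : ℝ) / r) := Real.sqrt_le_sqrt hcs
    have h3 := nsmul_lammin_le_trace A (Matrix.isHermitian_add_transpose_self _)
    rw [htrre] at h3
    have h4 : (n : ℝ) * lammin A (Matrix.isHermitian_add_transpose_self _)
        ≤ 2 * r * Real.sqrt ((n : ℝ) / r) := by
      have hTb : T.re ≤ Real.sqrt ((n : ℝ) / r) := le_trans h1 h2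
      nlinarith
    have h5 : lammin A (Matrix.isHermitian_add_transpose_self _)
        ≤ 2 * r * Real.sqrt ((n : ℝ) / r) / n := by
      rw [le_div_iff₀ hnR]
      linarith [h4]
    calc (1 / 2 : ℝ) * lammin A (Matrix.isHermitian_add_transpose_self _)
        ≤ (1 / 2 : ℝ) * (2 * r * Real.sqrt ((n : ℝ) / r) / n) := by
          exact mul_le_mul_of_nonneg_left h5 (by norm_num)
      _ = (r : ℝ) * Real.sqrt ((n : ℝ) / r) / n := by ring
      _ = Real.sqrt ((r : ℝ) / n) := sqrt_helper hrR hnR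
end
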